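/- Trimming lemma for budgeted trees: let T be a tree rooted at r in a graph that is B-proper for r (every vertex reachable from r at cost at most B), with vertex prizes p' ≥ 0 and vertex costs c' ≥ 0, prize-to-cost ratio γ = p'(T)/c'(T), and suppose ε ∈ (0,1] and c'(T) ≥ εB/2. Then there exists a subtree T* of T containing r with prize-to-cost ratio at least εγ/4 and cost εB/2 ≤ c'(T*) ≤ (1+ε)B. -/

import Mathlib

open Finset
open scoped Classical

lemma anc_antisymm {V : Type*} (par : V → V) (r : V) (hroot : par r = r)
    (hacyc : ∀ v, ∃ k, par^[k] v = r) {u v : V}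
    (h1 : ∃ k, par^[k] u = v) (h2 : ∃ j, par^[j] v = u) : u = v := by
  obtain ⟨k, hk⟩ := h1
  obtain ⟨j, hj⟩ := h2
  rcases Nat.eq_zero_or_pos k with hk0 | hkpos
  · rw [hk0] at hk; simpa using hk
  · have hcyc : par^[k + j] u = u := by
      rw [add_comm, Function.iterate_add_apply, hk, hj]
    have hiter : ∀ n, par^[n * (k + j)] u = u := by
      intro n
      induction n with
      | zero => simp
      | succ m ih => rw [Nat.succ_mul, Function.iterate_add_apply, hcyc, ih]
    obtain ⟨m, hm⟩ := hacyc u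
    have hge : m ≤ m * (k + j) := Nat.le_mul_of_pos_right m (by omega)
    have hur : u = r := by
      have h := hiter m
      rw [← Nat.sub_add_cancel hge, Function.iterate_add_apply, hm,
        Function.iterate_fixed hroot] at h
      exact h.symm
    have hvr : v = r := by rw [← hk, hur, Function.iterate_fixed hroot]
    rw [hur, hvr]

lemma greedy_subset {ι : Type*} [DecidableEq ι] (s : Finset ι) (f : ι → ℝ)
    (b : ℝ) (hb : 0 < b)
    (hsmall : ∀ i ∈ s, f i < b) (htot : b ≤ ∑ i ∈ s, f i) :
    ∃ K, K ⊆ s ∧ K.Nonempty ∧ b ≤ ∑ i ∈ K, f i ∧ ∑ i ∈ K, f i < 2 * b := by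
  classical
  set 𝒦 := s.powerset.filter (fun K => b ≤ ∑ i ∈ K, f i) with h𝒦
  have hs𝒦 : s ∈ 𝒦 := mem_filter.mpr ⟨mem_powerset.mpr Finset.Subset.rfl, htot⟩
  obtain ⟨K, hK𝒦, hKmin⟩ := 𝒦.exists_min_image card ⟨s, hs𝒦⟩
  have hKs : K ⊆ s := mem_powerset.mp (mem_filter.mp hK𝒦).1
  have hKsum : b ≤ ∑ i ∈ K, f i := (mem_filter.mp hK𝒦).2
  have hKne : K.Nonempty := by
    rcases K.eq_empty_or_nonempty with rfl | h
    · simp at hKsum; linarith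
    · exact h
  obtain ⟨i, hi⟩ := hKne
  have herase : ∑ j ∈ K.erase i, f j < b := by
    by_contra hcon
    push_neg at hcon
    have hmem : K.erase i ∈ 𝒦 :=
      mem_filter.mpr ⟨mem_powerset.mpr ((erase_subset _ _).trans hKs), hcon⟩
    have h1 := hKmin _ hmem
    have h2 := card_erase_lt_of_mem hi
    omega
  have hfi : f i < b := hsmall i (hKs hi)
  refine ⟨K, hKs, ⟨i, hi⟩, hKsum, ?_⟩
  rw [← Finset.add_sum_erase K f hi]
  linarith

set_option maxHeartbeats 2000000 in
lemma main_ind {V : Type*} [Fintype V] (par : V → V) (r : V)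
    (hroot : par r = r) (hacyc : ∀ v, ∃ k, par^[k] v = r)
    (p' c' : V → ℝ) (hp : ∀ v, 0 ≤ p' v) (hc : ∀ v, 0 ≤ c' v)
    (B : ℝ) (hB : 0 < B)
    (hproper : ∀ v, ∑ u ∈ (univ : Finset V).filter (fun u => ∃ k, par^[k] v = u), c' u ≤ B)
    (ε : ℝ) (hε0 : 0 < ε) (hε1 : ε ≤ 1)
    (P C : ℝ) (hP : 0 ≤ P) (hC : 0 < C) :
    ∀ n : ℕ, ∀ T' : Finset V, T'.card ≤ n → r ∈ T' → (∀ v ∈ T', par v ∈ T') →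
      ε * B / 2 ≤ ∑ v ∈ T', c' v → (∑ v ∈ T', c' v) ≤ C →
      P - (ε * P / (4 * C)) * (1 + 2 / ε) * (C - ∑ v ∈ T', c' v) ≤ ∑ v ∈ T', p' v →
      ∃ S : Finset V, r ∈ S ∧ (∀ v ∈ S, par v ∈ S) ∧
        (ε * P / (4 * C)) * (∑ v ∈ S, c' v) ≤ ∑ v ∈ S, p' v ∧
        ε * B / 2 ≤ ∑ v ∈ S, c' v ∧ (∑ v ∈ S, c' v) ≤ (1 + ε) * B := by
  have hρ0 : 0 ≤ ε * P / (4 * C) := by positivity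
  intro n
  induction n with
  | zero =>
    intro T' hcard hr _ _ _ _
    have hT' : T' = ∅ := Finset.card_eq_zero.mp (Nat.le_zero.mp hcard)
    rw [hT'] at hr
    exact absurd hr (Finset.notMem_empty r)
  | succ n ih =>
    intro T' hcard hr hclosed hcostlo hcosthi hinv
    by_cases hbase : ∑ v ∈ T', c' v ≤ (1 + ε) * B
    · refine ⟨T', hr, hclosed, ?_, hcostlo, hbase⟩
      have hcT0 : 0 ≤ ∑ v ∈ T', c' v := sum_nonneg fun v _ => hc v
      have hkey : (ε * P / (4 * C)) * (1 + 2 / ε) * (C - ∑ v ∈ T', c' v)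
          = ((ε + 2) * P * (C - ∑ v ∈ T', c' v)) / (4 * C) := by
        field_simp
      rw [hkey] at hinv
      have h2 : (ε * P / (4 * C)) * (∑ v ∈ T', c' v)
          = (ε * P * (∑ v ∈ T', c' v)) / (4 * C) := by ring
      rw [h2, div_le_iff₀ (by positivity : (0:ℝ) < 4 * C)]
      have h4 : (P - ((ε + 2) * P * (C - ∑ v ∈ T', c' v)) / (4 * C)) * (4 * C)
          = 4 * C * P - (ε + 2) * P * (C - ∑ v ∈ T', c' v) := by
        field_simp
      have h5 : 4 * C * P - (ε + 2) * P * (C - ∑ v ∈ T', c' v)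
          ≤ (∑ v ∈ T', p' v) * (4 * C) := by
        rw [← h4]
        exact mul_le_mul_of_nonneg_right hinv (by positivity)
      nlinarith [mul_nonneg (mul_nonneg (by linarith : (0:ℝ) ≤ 2 - ε) hP) hC.le,
        mul_nonneg (mul_nonneg (by norm_num : (0:ℝ) ≤ 2) hP) hcT0]
    · push_neg at hbase
      -- subtree function
      set subt : V → Finset V := fun v => T'.filter (fun u => ∃ k, par^[k] u = v) with hsubdef
      have hsub_subset : ∀ w, subt w ⊆ T' := fun w => filter_subset _ _
      have hself : ∀ w ∈ T', w ∈ subt w := fun w hw => mem_filter.mpr ⟨hw, 0, rfl⟩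
      have hanc_of : ∀ {u w : V}, u ∈ subt w → ∃ k, par^[k] u = w :=
        fun h => (mem_filter.mp h).2
      have hsubr : subt r = T' := by
        apply Finset.filter_true_of_mem
        intro u _
        exact hacyc u
      have hA : ∃ v ∈ T', (ε * B / 2 ≤ ∑ u ∈ subt v, c' u) ∧
          ∀ w ∈ T', ε * B / 2 ≤ ∑ u ∈ subt w, c' u → (subt v).card ≤ (subt w).card := by
        set A := T'.filter (fun v => ε * B / 2 ≤ ∑ u ∈ subt v, c' u) with hAdef
        have hrA : r ∈ A := mem_filter.mpr ⟨hr, by rw [hsubr]; exact hcostlo⟩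
        obtain ⟨v, hvA, hvmin⟩ := A.exists_min_image (fun v => (subt v).card) ⟨r, hrA⟩
        obtain ⟨hvT', hvcost⟩ := mem_filter.mp hvA
        exact ⟨v, hvT', hvcost, fun w hw hwc => hvmin w (mem_filter.mpr ⟨hw, hwc⟩)⟩
      obtain ⟨v, hvT', hvcost, hvmin⟩ := hA
      set chil := T'.filter (fun w => par w = v ∧ w ≠ v) with hchil
      have hchild_sub : ∀ w ∈ chil, subt w ⊆ subt v := by
        intro w hw u hu
        obtain ⟨hwT, hwp, hwn⟩ := mem_filter.mp hw
        obtain ⟨huT, k, hk⟩ := mem_filter.mp hu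
        exact mem_filter.mpr ⟨huT, k + 1, by rw [Function.iterate_succ_apply', hk, hwp]⟩
      have hv_not_child : ∀ w ∈ chil, v ∉ subt w := by
        intro w hw hvin
        obtain ⟨hwT, hwp, hwn⟩ := mem_filter.mp hw
        exact hwn (anc_antisymm par r hroot hacyc (hanc_of hvin) ⟨1, by simpa using hwp⟩).symm
      have hchild_small : ∀ w ∈ chil, ∑ u ∈ subt w, c' u < ε * B / 2 := by
        intro w hw
        by_contra hcon
        push_neg at hcon
        obtain ⟨hwT, hwp, hwn⟩ := mem_filter.mp hw
        have hss : subt w ⊂ subt v := by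
          rw [Finset.ssubset_def]
          exact ⟨hchild_sub w hw, fun hsup => hv_not_child w hw (hsup (hself v hvT'))⟩
        have h1 := hvmin w hwT hcon
        have h2 := Finset.card_lt_card hss
        omega
      have huniq : ∀ w ∈ chil, ∀ w' ∈ chil, ∀ u, u ∈ subt w → u ∈ subt w' → w = w' := by
        have hmain : ∀ (w w' u : V) (i j : ℕ), w ∈ chil → w' ∈ chil → i ≤ j →
            par^[i] u = w → par^[j] u = w' → w = w' := by
          intro w w' u i j hw hw' hij hi hj
          obtain ⟨hwT, hwp, hwn⟩ := mem_filter.mp hw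
          obtain ⟨hwT', hwp', hwn'⟩ := mem_filter.mp hw'
          have hji : par^[j - i] w = w' := by
            rw [← hi, ← Function.iterate_add_apply, Nat.sub_add_cancel hij, hj]
          rcases Nat.eq_zero_or_pos (j - i) with h0 | hpos
          · rw [h0] at hji; simpa using hji
          · obtain ⟨t, ht⟩ := Nat.exists_eq_succ_of_ne_zero (by omega : j - i ≠ 0)
            rw [ht, Function.iterate_succ_apply, hwp] at hji
            have : w' = v := anc_antisymm par r hroot hacyc
              ⟨1, by simpa using hwp'⟩ ⟨t, hji⟩
            exact absurd this hwn'
        intro w hw w' hw' u hu hu'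
        obtain ⟨_, i, hi⟩ := mem_filter.mp hu
        obtain ⟨_, j, hj⟩ := mem_filter.mp hu'
        rcases le_total i j with h | h
        · exact hmain w w' u i j hw hw' h hi hj
        · exact (hmain w' w u j i hw' hw h hj hi).symm
      have hpdisj : ∀ K : Finset V, K ⊆ chil → Set.PairwiseDisjoint (K : Set V) subt := by
        intro K hK w hw w' hw' hne
        simp only [Finset.mem_coe] at hw hw'
        simp only [Function.onFun]
        exact Finset.disjoint_left.mpr fun u hu hu' => hne (huniq w (hK hw) w' (hK hw') u hu hu')
      have hsetdecomp : ∀ K : Finset V, K ⊆ chil → ∀ f : V → ℝ,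
          ∑ u ∈ K.biUnion subt, f u = ∑ w ∈ K, ∑ u ∈ subt w, f u :=
        fun K hK f => Finset.sum_biUnion (hpdisj K hK)
      have hcover : ∀ (k : ℕ) (u : V), u ∈ T' → par^[k] u = v →
          u = v ∨ ∃ w ∈ chil, u ∈ subt w := by
        intro k
        induction k with
        | zero => intro u _ hk; left; simpa using hk
        | succ m ihm =>
          intro u huT hk
          by_cases huv : u = v
          · left; exact huv
          · have hpu : par u ∈ T' := hclosed u huT
            have hk' : par^[m] (par u) = v := by
              rw [← Function.iterate_succ_apply]; exact hk
            rcases ihm (par u) hpu hk' with hpv | ⟨w, hw, hmem⟩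
            · exact Or.inr ⟨u, mem_filter.mpr ⟨huT, hpv, huv⟩, hself u huT⟩
            · obtain ⟨hpuT, k', hk''⟩ := mem_filter.mp hmem
              exact Or.inr ⟨w, hw, mem_filter.mpr ⟨huT, k' + 1,
                by rw [Function.iterate_succ_apply]; exact hk''⟩⟩
      have hsubv_eq : subt v = insert v (chil.biUnion subt) := by
        ext u
        simp only [Finset.mem_insert, Finset.mem_biUnion]
        constructor
        · intro hu
          obtain ⟨huT, k, hk⟩ := mem_filter.mp hu
          rcases hcover k u huT hk with h | ⟨w, hw, hu'⟩
          · exact Or.inl h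
          · exact Or.inr ⟨w, hw, hu'⟩
        · rintro (rfl | ⟨w, hw, hu⟩)
          · exact hself u hvT'
          · exact hchild_sub w hw hu
      have hvnotbi : v ∉ chil.biUnion subt := by
        rw [Finset.mem_biUnion]
        rintro ⟨w, hw, hv⟩
        exact hv_not_child w hw hv
      have hdecomp : ∀ f : V → ℝ,
          ∑ u ∈ subt v, f u = f v + ∑ w ∈ chil, ∑ u ∈ subt w, f u := by
        intro f
        rw [hsubv_eq, Finset.sum_insert hvnotbi, hsetdecomp chil Finset.Subset.rfl]
      -- ancestors of v
      set anc := (univ : Finset V).filter (fun u => ∃ k, par^[k] v = u) with hancdef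
      have hancB : ∑ u ∈ anc, c' u ≤ B := hproper v
      have hranc : r ∈ anc := mem_filter.mpr ⟨mem_univ r, hacyc v⟩
      have hvanc : v ∈ anc := mem_filter.mpr ⟨mem_univ v, 0, rfl⟩
      have hanc_closed : ∀ u ∈ anc, par u ∈ anc := by
        intro u hu
        obtain ⟨_, k, hk⟩ := mem_filter.mp hu
        exact mem_filter.mpr ⟨mem_univ _, k + 1, by rw [Function.iterate_succ_apply', hk]⟩
      have hancp0 : 0 ≤ ∑ u ∈ anc, p' u := sum_nonneg fun u _ => hp u
      have hancc0 : 0 ≤ ∑ u ∈ anc, c' u := sum_nonneg fun u _ => hc u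
      have hcvB : c' v ≤ B := le_trans (Finset.single_le_sum (fun u _ => hc u) hvanc) hancB
      have hεB0 : (0:ℝ) ≤ ε * B := mul_nonneg hε0.le hB.le
      -- main construction: chunk D and candidate S
      have hmainc : ∃ D S : Finset V,
          D ⊆ T' ∧ D.Nonempty ∧ r ∉ D ∧
          (∀ u ∈ T', par u ∈ D → u ∈ D) ∧
          ε * B / 2 ≤ ∑ u ∈ D, c' u ∧
          ε * B / 2 ≤ ∑ u ∈ T', c' u - ∑ u ∈ D, c' u ∧
          r ∈ S ∧ (∀ u ∈ S, par u ∈ S) ∧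
          (∑ u ∈ D, p' u ≤ ∑ u ∈ S, p' u) ∧
          ε * B / 2 ≤ ∑ u ∈ S, c' u ∧
          (∑ u ∈ S, c' u ≤ B + ∑ u ∈ D, c' u) ∧
          (∑ u ∈ S, c' u ≤ (1 + ε) * B) := by
        by_cases hcase : ε * B / 2 ≤ ∑ w ∈ chil, ∑ u ∈ subt w, c' u
        · -- Case A : group children subtrees
          obtain ⟨K, hKchil, hKne, hKlo, hKhi⟩ := greedy_subset chil
            (fun w => ∑ u ∈ subt w, c' u) (ε * B / 2) (by positivity) hchild_small hcase
          set D := K.biUnion subt with hD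
          have hDc : ∑ u ∈ D, c' u = ∑ w ∈ K, ∑ u ∈ subt w, c' u := hsetdecomp K hKchil c'
          have hDT' : D ⊆ T' := by
            intro u hu
            rw [hD, Finset.mem_biUnion] at hu
            obtain ⟨w, _, hu⟩ := hu
            exact hsub_subset w hu
          have hDlo : ε * B / 2 ≤ ∑ u ∈ D, c' u := by rw [hDc]; exact hKlo
          have hDhi : ∑ u ∈ D, c' u < ε * B := by rw [hDc]; linarith
          have hDne : D.Nonempty := by
            obtain ⟨w, hw⟩ := hKne
            exact ⟨w, Finset.mem_biUnion.mpr ⟨w, hw,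
              hself w (mem_filter.mp (hKchil hw)).1⟩⟩
          have hrD : r ∉ D := by
            intro hrd
            rw [hD, Finset.mem_biUnion] at hrd
            obtain ⟨w, hwK, hrw⟩ := hrd
            obtain ⟨k, hk⟩ := hanc_of hrw
            have hwr : w = r := by rw [← hk, Function.iterate_fixed hroot]
            obtain ⟨hwT, hwp, hwn⟩ := mem_filter.mp (hKchil hwK)
            have hvr : v = r := by rw [← hwp, hwr, hroot]
            exact hwn (hwr.trans hvr.symm)
          have hDdown : ∀ u ∈ T', par u ∈ D → u ∈ D := by
            intro u huT hpu
            rw [hD, Finset.mem_biUnion] at hpu ⊢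
            obtain ⟨w, hwK, hpw⟩ := hpu
            obtain ⟨_, k, hk⟩ := mem_filter.mp hpw
            exact ⟨w, hwK, mem_filter.mpr ⟨huT, k + 1,
              by rw [Function.iterate_succ_apply]; exact hk⟩⟩
          have hdisjDA : Disjoint D anc := by
            rw [Finset.disjoint_left]
            intro u huD huA
            rw [hD, Finset.mem_biUnion] at huD
            obtain ⟨w, hwK, huw⟩ := huD
            obtain ⟨k, hk⟩ := hanc_of huw
            obtain ⟨_, hwp, _⟩ := mem_filter.mp (hKchil hwK)
            obtain ⟨_, j, hj⟩ := mem_filter.mp huA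
            have huv : u = v := anc_antisymm par r hroot hacyc
              ⟨k + 1, by rw [Function.iterate_succ_apply', hk, hwp]⟩ ⟨j, hj⟩
            exact hv_not_child w (hKchil hwK) (huv ▸ huw)
          refine ⟨D, D ∪ anc, hDT', hDne, hrD, hDdown, hDlo, ?_, Finset.mem_union_right _ hranc,
            ?_, ?_, ?_, ?_, ?_⟩
          · nlinarith
          · intro u hu
            rcases Finset.mem_union.mp hu with huD | huA
            · rw [hD, Finset.mem_biUnion] at huD
              obtain ⟨w, hwK, huw⟩ := huD
              obtain ⟨huT, k, hk⟩ := mem_filter.mp huw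
              cases k with
              | zero =>
                have huw' : u = w := by simpa using hk
                obtain ⟨_, hwp, _⟩ := mem_filter.mp (hKchil hwK)
                apply Finset.mem_union_right
                rw [huw', hwp]
                exact hvanc
              | succ m =>
                apply Finset.mem_union_left
                rw [Finset.mem_biUnion]
                exact ⟨w, hwK, mem_filter.mpr ⟨hclosed u huT, m,
                  by rw [← Function.iterate_succ_apply]; exact hk⟩⟩
            · exact Finset.mem_union_right _ (hanc_closed u huA)
          · rw [Finset.sum_union hdisjDA]; linarith
          · rw [Finset.sum_union hdisjDA]; linarith
          · rw [Finset.sum_union hdisjDA]; linarith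
          · rw [Finset.sum_union hdisjDA]; nlinarith
        · -- Case B : take full subtree of v
          push_neg at hcase
          have hsubvc : ∑ u ∈ subt v, c' u = c' v + ∑ w ∈ chil, ∑ u ∈ subt w, c' u :=
            hdecomp c'
          set D := subt v with hD
          have hDT' : D ⊆ T' := hsub_subset v
          have hDlo : ε * B / 2 ≤ ∑ u ∈ D, c' u := hvcost
          have hDhi : ∑ u ∈ D, c' u ≤ B + ε * B / 2 := by rw [hD, hsubvc]; linarith
          have hvner : v ≠ r := by
            intro hvr
            have heq : ∑ u ∈ T', c' u = ∑ u ∈ D, c' u := by rw [hD, hvr, hsubr]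
            nlinarith
          have hrD : r ∉ D := by
            intro hrd
            obtain ⟨k, hk⟩ := hanc_of hrd
            have : v = r := by rw [← hk, Function.iterate_fixed hroot]
            exact hvner this
          have hDne : D.Nonempty := ⟨v, hself v hvT'⟩
          have hDdown : ∀ u ∈ T', par u ∈ D → u ∈ D := by
            intro u huT hpu
            obtain ⟨_, k, hk⟩ := mem_filter.mp hpu
            exact mem_filter.mpr ⟨huT, k + 1,
              by rw [Function.iterate_succ_apply]; exact hk⟩
          have hSsum : ∑ u ∈ D ∪ anc, c' u + ∑ u ∈ D ∩ anc, c' u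
              = ∑ u ∈ D, c' u + ∑ u ∈ anc, c' u := Finset.sum_union_inter
          have hvDA : v ∈ D ∩ anc := Finset.mem_inter.mpr ⟨hself v hvT', hvanc⟩
          have hinterlo : c' v ≤ ∑ u ∈ D ∩ anc, c' u :=
            Finset.single_le_sum (fun u _ => hc u) hvDA
          have hinterc0 : 0 ≤ ∑ u ∈ D ∩ anc, c' u := sum_nonneg fun u _ => hc u
          refine ⟨D, D ∪ anc, hDT', hDne, hrD, hDdown, hDlo, ?_, Finset.mem_union_right _ hranc,
            ?_, ?_, ?_, ?_, ?_⟩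
          · nlinarith
          · intro u hu
            rcases Finset.mem_union.mp hu with huD | huA
            · obtain ⟨huT, k, hk⟩ := mem_filter.mp huD
              cases k with
              | zero =>
                have huv : u = v := by simpa using hk
                apply Finset.mem_union_right
                rw [huv]
                exact mem_filter.mpr ⟨mem_univ _, 1, by simp⟩
              | succ m =>
                exact Finset.mem_union_left _ (mem_filter.mpr ⟨hclosed u huT, m,
                  by rw [← Function.iterate_succ_apply]; exact hk⟩)
            · exact Finset.mem_union_right _ (hanc_closed u huA)
          · exact Finset.sum_le_sum_of_subset_of_nonneg Finset.subset_union_left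
              (fun u _ _ => hp u)
          · exact le_trans hDlo (Finset.sum_le_sum_of_subset_of_nonneg
              Finset.subset_union_left (fun u _ _ => hc u))
          · linarith
          · have h1 : ∑ u ∈ D, c' u ≤ c' v + ε * B / 2 := by rw [hD, hsubvc]; linarith
            nlinarith
      obtain ⟨D, S, hDT', hDne, hrD, hDdown, hDlo, hremlo, hrS, hSclosed, hSp, hSclo,
        hScD, hSchi⟩ := hmainc
      by_cases hbr : (ε * P / (4 * C)) * (B + ∑ u ∈ D, c' u) ≤ ∑ u ∈ D, p' u
      · refine ⟨S, hrS, hSclosed, ?_, hSclo, hSchi⟩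
        have h1 : (ε * P / (4 * C)) * (∑ u ∈ S, c' u)
            ≤ (ε * P / (4 * C)) * (B + ∑ u ∈ D, c' u) :=
          mul_le_mul_of_nonneg_left hScD hρ0
        linarith
      · push_neg at hbr
        have hcard' : (T' \ D).card ≤ n := by
          have h1 : (T' \ D).card < T'.card :=
            Finset.card_lt_card (Finset.sdiff_ssubset hDT' hDne)
          omega
        have hrT'' : r ∈ T' \ D := Finset.mem_sdiff.mpr ⟨hr, hrD⟩
        have hclosed'' : ∀ u ∈ T' \ D, par u ∈ T' \ D := by
          intro u hu
          obtain ⟨huT, huD⟩ := Finset.mem_sdiff.mp hu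
          exact Finset.mem_sdiff.mpr ⟨hclosed u huT, fun hpu => huD (hDdown u huT hpu)⟩
        have hsplit : ∑ u ∈ T' \ D, c' u = ∑ u ∈ T', c' u - ∑ u ∈ D, c' u := by
          have h := Finset.sum_sdiff (f := c') hDT'
          linarith
        have hsplitp : ∑ u ∈ T' \ D, p' u = ∑ u ∈ T', p' u - ∑ u ∈ D, p' u := by
          have h := Finset.sum_sdiff (f := p') hDT'
          linarith
        have hcost'' : ε * B / 2 ≤ ∑ u ∈ T' \ D, c' u := by rw [hsplit]; exact hremlo
        have hcosthi'' : ∑ u ∈ T' \ D, c' u ≤ C := by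
          have h0 : 0 ≤ ∑ u ∈ D, c' u := sum_nonneg fun u _ => hc u
          rw [hsplit]; linarith
        have hinv'' : P - (ε * P / (4 * C)) * (1 + 2 / ε) * (C - ∑ u ∈ T' \ D, c' u)
            ≤ ∑ u ∈ T' \ D, p' u := by
          have hBle : B ≤ (2 / ε) * ∑ u ∈ D, c' u := by
            have h20 : (0:ℝ) ≤ 2 / ε := by positivity
            have h := mul_le_mul_of_nonneg_left hDlo h20
            have heq : (2 / ε) * (ε * B / 2) = B := by field_simp
            linarith
          have hDp : ∑ u ∈ D, p' u ≤ (ε * P / (4 * C)) * (1 + 2 / ε) * ∑ u ∈ D, c' u := by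
            have h1 : (ε * P / (4 * C)) * (B + ∑ u ∈ D, c' u)
                ≤ (ε * P / (4 * C)) * ((2 / ε) * ∑ u ∈ D, c' u + ∑ u ∈ D, c' u) :=
              mul_le_mul_of_nonneg_left (by linarith) hρ0
            have h2 : (ε * P / (4 * C)) * ((2 / ε) * ∑ u ∈ D, c' u + ∑ u ∈ D, c' u)
                = (ε * P / (4 * C)) * (1 + 2 / ε) * ∑ u ∈ D, c' u := by ring
            linarith
          have hexp : P - (ε * P / (4 * C)) * (1 + 2 / ε) * (C - (∑ u ∈ T', c' u - ∑ u ∈ D, c' u))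
              = (P - (ε * P / (4 * C)) * (1 + 2 / ε) * (C - ∑ u ∈ T', c' u))
                - (ε * P / (4 * C)) * (1 + 2 / ε) * (∑ u ∈ D, c' u) := by ring
          rw [hsplitp, hsplit, hexp]
          linarith
        exact ih (T' \ D) hcard' hrT'' hclosed'' hcost'' hcosthi'' hinv''

/-- Trimming lemma for budgeted trees (Bateni–Hajiaghayi–Liaghat).
A tree rooted at `r` is modeled by a parent function `par` on its vertex set with
`par r = r` and every vertex reaching `r` by iterating `par`; a subtree containing
`r` is a parent-closed set containing `r`. If the tree is B-proper for `r` (the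
cost of the root-to-v path, i.e., of v's ancestors, is at most B for every v),
ε ∈ (0,1], and the total cost is at least εB/2, then there is a subtree T*
containing r with prize-to-cost ratio at least ε/4 times that of the whole tree
and cost εB/2 ≤ c'(T*) ≤ (1+ε)B. -/
theorem stmt13 {V : Type*} [Fintype V] (par : V → V) (r : V)
    (hroot : par r = r) (hacyc : ∀ v, ∃ k, par^[k] v = r)
    (p' c' : V → ℝ) (hp : ∀ v, 0 ≤ p' v) (hc : ∀ v, 0 ≤ c' v)
    (B : ℝ) (hB : 0 ≤ B)
    (hproper : ∀ v, ∑ u ∈ (univ : Finset V).filter (fun u => ∃ k, par^[k] v = u), c' u ≤ B)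
    (ε : ℝ) (hε0 : 0 < ε) (hε1 : ε ≤ 1)
    (hcost : ε * B / 2 ≤ ∑ v, c' v) :
    ∃ S : Finset V, r ∈ S ∧ (∀ v ∈ S, par v ∈ S) ∧
      ε * ((∑ v, p' v) / (∑ v, c' v)) / 4 ≤ (∑ v ∈ S, p' v) / (∑ v ∈ S, c' v) ∧
      ε * B / 2 ≤ ∑ v ∈ S, c' v ∧ (∑ v ∈ S, c' v) ≤ (1 + ε) * B := by

  classical
  rcases eq_or_lt_of_le hB with hB0 | hBpos
  · -- B = 0 : all costs are zero
    have hc0 : ∀ v, c' v = 0 := by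
      intro v
      have h1 := hproper v
      have hv : v ∈ (univ : Finset V).filter (fun u => ∃ k, par^[k] v = u) :=
        mem_filter.mpr ⟨mem_univ v, 0, rfl⟩
      have h2 : c' v ≤ ∑ u ∈ (univ : Finset V).filter (fun u => ∃ k, par^[k] v = u), c' u :=
        Finset.single_le_sum (fun u _ => hc u) hv
      have h3 := hc v
      rw [← hB0] at h1
      linarith
    have hzero : ∀ S : Finset V, ∑ v ∈ S, c' v = 0 :=
      fun S => Finset.sum_eq_zero fun v _ => hc0 v
    refine ⟨univ, mem_univ r, fun v _ => mem_univ _, ?_, ?_, ?_⟩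
    · rw [hzero]
      simp
    · rw [hzero, ← hB0]
      simp
    · rw [hzero, ← hB0]
      simp
  · have hP0 : 0 ≤ ∑ v, p' v := sum_nonneg fun v _ => hp v
    have hC0 : 0 < ∑ v, c' v :=
      lt_of_lt_of_le (by positivity : (0:ℝ) < ε * B / 2) hcost
    obtain ⟨S, hrS, hScl, hSratio, hSlo, hShi⟩ :=
      main_ind par r hroot hacyc p' c' hp hc B hBpos hproper ε hε0 hε1
        (∑ v, p' v) (∑ v, c' v) hP0 hC0 (univ.card) univ le_rfl (mem_univ r)
        (fun v _ => mem_univ _) hcost le_rfl (by simp)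
    refine ⟨S, hrS, hScl, ?_, hSlo, hShi⟩
    have hcS : 0 < ∑ v ∈ S, c' v :=
      lt_of_lt_of_le (by positivity : (0:ℝ) < ε * B / 2) hSlo
    rw [le_div_iff₀ hcS]
    have heq : ε * ((∑ v, p' v) / (∑ v, c' v)) / 4 * (∑ v ∈ S, c' v)
        = (ε * (∑ v, p' v) / (4 * (∑ v, c' v))) * (∑ v ∈ S, c' v) := by ring
    rw [heq]
    exact hSratio
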